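/- Let γ ∈ GL(3,ℂ) with rows (a₁,a₂,a₃),(b₁,b₂,b₃),(c₁,c₂,c₃), and on the open set of points (z₁,z₂) ∈ ℂ² with c₁z₁+c₂z₂+c₃ ≠ 0 define the holomorphic functions w₁(z₁,z₂) := (a₁z₁+a₂z₂+a₃)/(c₁z₁+c₂z₂+c₃) and w₂(z₁,z₂) := (b₁z₁+b₂z₂+b₃)/(c₁z₁+c₂z₂+c₃). Then J(w₁,w₂) = det(γ)·(c₁z₁+c₂z₂+c₃)⁻³ ≠ 0 and all four GL(3) derivatives of the pair (w₁,w₂) with respect to (z₁,z₂) vanish identically: {w₁,w₂;z₁,z₂}_{z₁} = 0, {w₁,w₂;z₁,z₂}_{z₂} = 0, [w₁,w₂;z₁,z₂]_{z₁} = 0, [w₁,w₂;z₁,z₂]_{z₂} = 0. -/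

import Mathlib

open Complex Matrix

noncomputable section

/-- Partial derivative in the first complex variable. -/
def pdx (f : ℂ × ℂ → ℂ) (p : ℂ × ℂ) : ℂ := deriv (fun x => f (x, p.2)) p.1

/-- Partial derivative in the second complex variable. -/
def pdy (f : ℂ × ℂ → ℂ) (p : ℂ × ℂ) : ℂ := deriv (fun y => f (p.1, y)) p.2

/-- The Jacobian `J(u₁,u₂) = ∂ₓu₁·∂ᵧu₂ − ∂ₓu₂·∂ᵧu₁`. -/
def Jac (u₁ u₂ : ℂ × ℂ → ℂ) (p : ℂ × ℂ) : ℂ :=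
  pdx u₁ p * pdy u₂ p - pdx u₂ p * pdy u₁ p

/-- The GL(3) derivative `{u₁,u₂;x,y}ₓ`. -/
def brX (u₁ u₂ : ℂ × ℂ → ℂ) (p : ℂ × ℂ) : ℂ :=
  (pdx u₁ p * pdx (pdx u₂) p - pdx u₂ p * pdx (pdx u₁) p) / Jac u₁ u₂ p

/-- The GL(3) derivative `{u₁,u₂;x,y}ᵧ`. -/
def brY (u₁ u₂ : ℂ × ℂ → ℂ) (p : ℂ × ℂ) : ℂ :=
  -(pdy u₁ p * pdy (pdy u₂) p - pdy u₂ p * pdy (pdy u₁) p) / Jac u₁ u₂ p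

/-- The GL(3) derivative `[u₁,u₂;x,y]ₓ`. -/
def sqX (u₁ u₂ : ℂ × ℂ → ℂ) (p : ℂ × ℂ) : ℂ :=
  ((pdy u₁ p * pdx (pdx u₂) p - pdy u₂ p * pdx (pdx u₁) p)
      + 2 * (pdx u₁ p * pdx (pdy u₂) p - pdx u₂ p * pdx (pdy u₁) p)) / Jac u₁ u₂ p

/-- The GL(3) derivative `[u₁,u₂;x,y]ᵧ`. -/
def sqY (u₁ u₂ : ℂ × ℂ → ℂ) (p : ℂ × ℂ) : ℂ :=
  -((pdx u₁ p * pdy (pdy u₂) p - pdx u₂ p * pdy (pdy u₁) p)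
      + 2 * (pdy u₁ p * pdx (pdy u₂) p - pdy u₂ p * pdx (pdy u₁) p)) / Jac u₁ u₂ p

private lemma aff_deriv (α β t : ℂ) : HasDerivAt (fun s : ℂ => α*s+β) α t := by
  simpa using ((hasDerivAt_id t).const_mul α).add_const β

private lemma hasDerivAt_frac (α β γ δ t : ℂ) (h : γ*t+δ ≠ 0) :
    HasDerivAt (fun s : ℂ => (α*s+β)/(γ*s+δ)) ((α*(γ*t+δ) - γ*(α*t+β))/(γ*t+δ)^2) t := by
  have := (aff_deriv α β t).fun_div (aff_deriv γ δ t) h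
  refine this.congr_deriv ?_
  ring

private lemma hasDerivAt_frac2 (α β γ δ t : ℂ) (h : γ*t+δ ≠ 0) :
    HasDerivAt (fun s : ℂ => (α*s+β)/(γ*s+δ)^2)
      ((α*(γ*t+δ) - 2*γ*(α*t+β))/(γ*t+δ)^3) t := by
  have h2 : HasDerivAt (fun s : ℂ => (γ*s+δ)^2) (2*(γ*t+δ)*γ) t := by
    simpa [mul_comm] using (aff_deriv γ δ t).fun_pow 2
  have := (aff_deriv α β t).fun_div h2 (pow_ne_zero 2 h)
  refine this.congr_deriv ?_
  field_simp

private lemma pdx_lin (α₁ α₂ α₃ c₁ c₂ c₃ : ℂ) (q : ℂ × ℂ)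
    (hq : c₁*q.1+c₂*q.2+c₃ ≠ 0) :
    pdx (fun p => (α₁*p.1+α₂*p.2+α₃)/(c₁*p.1+c₂*p.2+c₃)) q
      = (α₁*(c₂*q.2+c₃) - c₁*(α₂*q.2+α₃)) / (c₁*q.1+c₂*q.2+c₃)^2 := by
  obtain ⟨x, y⟩ := q
  simp only at hq ⊢
  have h := hasDerivAt_frac α₁ (α₂*y+α₃) c₁ (c₂*y+c₃) x (by rw [← add_assoc]; exact hq)
  show deriv (fun t : ℂ => (α₁*t+α₂*y+α₃)/(c₁*t+c₂*y+c₃)) x = _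
  simp only [← add_assoc] at h
  rw [h.deriv]
  ring

private lemma pdy_lin (α₁ α₂ α₃ c₁ c₂ c₃ : ℂ) (q : ℂ × ℂ)
    (hq : c₁*q.1+c₂*q.2+c₃ ≠ 0) :
    pdy (fun p => (α₁*p.1+α₂*p.2+α₃)/(c₁*p.1+c₂*p.2+c₃)) q
      = (α₂*(c₁*q.1+c₃) - c₂*(α₁*q.1+α₃)) / (c₁*q.1+c₂*q.2+c₃)^2 := by
  obtain ⟨x, y⟩ := q
  simp only at hq ⊢
  have hne : c₂*y+(c₁*x+c₃) ≠ 0 := by rw [show c₂*y+(c₁*x+c₃) = c₁*x+c₂*y+c₃ by ring]; exact hq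
  have h := hasDerivAt_frac α₂ (α₁*x+α₃) c₂ (c₁*x+c₃) y hne
  show deriv (fun t : ℂ => (α₁*x+α₂*t+α₃)/(c₁*x+c₂*t+c₃)) y = _
  rw [show (fun t : ℂ => (α₁*x+α₂*t+α₃)/(c₁*x+c₂*t+c₃))
      = (fun t : ℂ => (α₂*t+(α₁*x+α₃))/(c₂*t+(c₁*x+c₃))) from funext fun t => by ring]
  rw [h.deriv]
  field_simp
  ring

private lemma ev_ne (c₁ L x : ℂ) (h : c₁*x+L ≠ 0) : ∀ᶠ t in nhds x, c₁*t+L ≠ 0 := by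
  have hc : ContinuousAt (fun t : ℂ => c₁*t+L) x := by fun_prop
  exact hc.eventually_ne h

private lemma pdxx_lin (α₁ α₂ α₃ c₁ c₂ c₃ : ℂ) (q : ℂ × ℂ)
    (hq : c₁*q.1+c₂*q.2+c₃ ≠ 0) :
    pdx (pdx (fun p => (α₁*p.1+α₂*p.2+α₃)/(c₁*p.1+c₂*p.2+c₃))) q
      = -2*c₁*(α₁*(c₂*q.2+c₃) - c₁*(α₂*q.2+α₃)) / (c₁*q.1+c₂*q.2+c₃)^3 := by
  obtain ⟨x, y⟩ := q
  simp only at hq ⊢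
  set K : ℂ := α₁*(c₂*y+c₃) - c₁*(α₂*y+α₃) with hK
  have hne : c₁*x+(c₂*y+c₃) ≠ 0 := by rwa [← add_assoc]
  have hev : ∀ᶠ t in nhds x, c₁*t+(c₂*y+c₃) ≠ 0 := ev_ne _ _ _ hne
  have heq : (fun t => pdx (fun p => (α₁*p.1+α₂*p.2+α₃)/(c₁*p.1+c₂*p.2+c₃)) (t, y))
      =ᶠ[nhds x] (fun t => ((0:ℂ)*t+K)/(c₁*t+(c₂*y+c₃))^2) := by
    filter_upwards [hev] with t ht
    rw [pdx_lin α₁ α₂ α₃ c₁ c₂ c₃ (t, y) (by rw [← add_assoc] at ht; exact ht)]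
    show (α₁*(c₂*y+c₃) - c₁*(α₂*y+α₃)) / (c₁*t+c₂*y+c₃)^2 = _
    rw [hK]; ring
  show deriv (fun t => pdx (fun p => (α₁*p.1+α₂*p.2+α₃)/(c₁*p.1+c₂*p.2+c₃)) (t, y)) x = _
  rw [heq.deriv_eq, (hasDerivAt_frac2 0 K c₁ (c₂*y+c₃) x hne).deriv, hK]
  field_simp
  ring

private lemma pdyy_lin (α₁ α₂ α₃ c₁ c₂ c₃ : ℂ) (q : ℂ × ℂ)
    (hq : c₁*q.1+c₂*q.2+c₃ ≠ 0) :
    pdy (pdy (fun p => (α₁*p.1+α₂*p.2+α₃)/(c₁*p.1+c₂*p.2+c₃))) q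
      = -2*c₂*(α₂*(c₁*q.1+c₃) - c₂*(α₁*q.1+α₃)) / (c₁*q.1+c₂*q.2+c₃)^3 := by
  obtain ⟨x, y⟩ := q
  simp only at hq ⊢
  set K : ℂ := α₂*(c₁*x+c₃) - c₂*(α₁*x+α₃) with hK
  have hne : c₂*y+(c₁*x+c₃) ≠ 0 := by rw [show c₂*y+(c₁*x+c₃) = c₁*x+c₂*y+c₃ by ring]; exact hq
  have hev : ∀ᶠ t in nhds y, c₂*t+(c₁*x+c₃) ≠ 0 := ev_ne _ _ _ hne
  have heq : (fun t => pdy (fun p => (α₁*p.1+α₂*p.2+α₃)/(c₁*p.1+c₂*p.2+c₃)) (x, t))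
      =ᶠ[nhds y] (fun t => ((0:ℂ)*t+K)/(c₂*t+(c₁*x+c₃))^2) := by
    filter_upwards [hev] with t ht
    rw [pdy_lin α₁ α₂ α₃ c₁ c₂ c₃ (x, t)
      (by rw [show c₁*x+c₂*t+c₃ = c₂*t+(c₁*x+c₃) by ring]; exact ht)]
    show (α₂*(c₁*x+c₃) - c₂*(α₁*x+α₃)) / (c₁*x+c₂*t+c₃)^2 = _
    rw [hK]; ring
  show deriv (fun t => pdy (fun p => (α₁*p.1+α₂*p.2+α₃)/(c₁*p.1+c₂*p.2+c₃)) (x, t)) y = _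
  rw [heq.deriv_eq, (hasDerivAt_frac2 0 K c₂ (c₁*x+c₃) y hne).deriv, hK]
  field_simp
  ring

private lemma pdxy_lin (α₁ α₂ α₃ c₁ c₂ c₃ : ℂ) (q : ℂ × ℂ)
    (hq : c₁*q.1+c₂*q.2+c₃ ≠ 0) :
    pdx (pdy (fun p => (α₁*p.1+α₂*p.2+α₃)/(c₁*p.1+c₂*p.2+c₃))) q
      = ((α₂*c₁-c₂*α₁)*(c₁*q.1+c₂*q.2+c₃)
          - 2*c₁*(α₂*(c₁*q.1+c₃) - c₂*(α₁*q.1+α₃))) / (c₁*q.1+c₂*q.2+c₃)^3 := by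
  obtain ⟨x, y⟩ := q
  simp only at hq ⊢
  have hne : c₁*x+(c₂*y+c₃) ≠ 0 := by rwa [← add_assoc]
  have hev : ∀ᶠ t in nhds x, c₁*t+(c₂*y+c₃) ≠ 0 := ev_ne _ _ _ hne
  have heq : (fun t => pdy (fun p => (α₁*p.1+α₂*p.2+α₃)/(c₁*p.1+c₂*p.2+c₃)) (t, y))
      =ᶠ[nhds x] (fun t => ((α₂*c₁-c₂*α₁)*t+(α₂*c₃-c₂*α₃))/(c₁*t+(c₂*y+c₃))^2) := by
    filter_upwards [hev] with t ht
    rw [pdy_lin α₁ α₂ α₃ c₁ c₂ c₃ (t, y) (by rw [← add_assoc] at ht; exact ht)]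
    show (α₂*(c₁*t+c₃) - c₂*(α₁*t+α₃)) / (c₁*t+c₂*y+c₃)^2 = _
    ring
  show deriv (fun t => pdy (fun p => (α₁*p.1+α₂*p.2+α₃)/(c₁*p.1+c₂*p.2+c₃)) (t, y)) x = _
  rw [heq.deriv_eq,
    (hasDerivAt_frac2 (α₂*c₁-c₂*α₁) (α₂*c₃-c₂*α₃) c₁ (c₂*y+c₃) x hne).deriv]
  field_simp
  ring

/-- The four GL(3) derivatives of a linear fractional pair
`(w₁,w₂) = γ(z₁,z₂)` with respect to `(z₁,z₂)` vanish, and its Jacobian equals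
`det(γ)·(c₁z₁+c₂z₂+c₃)⁻³ ≠ 0`. -/
theorem statement1 (a₁ a₂ a₃ b₁ b₂ b₃ c₁ c₂ c₃ : ℂ)
    (hdet : a₁ * (b₂ * c₃ - b₃ * c₂) - a₂ * (b₁ * c₃ - b₃ * c₁)
        + a₃ * (b₁ * c₂ - b₂ * c₁) ≠ 0)
    (w₁ w₂ : ℂ × ℂ → ℂ)
    (hw₁ : w₁ = fun p => (a₁ * p.1 + a₂ * p.2 + a₃) / (c₁ * p.1 + c₂ * p.2 + c₃))
    (hw₂ : w₂ = fun p => (b₁ * p.1 + b₂ * p.2 + b₃) / (c₁ * p.1 + c₂ * p.2 + c₃)) :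
    ∀ p : ℂ × ℂ, c₁ * p.1 + c₂ * p.2 + c₃ ≠ 0 →
      Jac w₁ w₂ p =
        (a₁ * (b₂ * c₃ - b₃ * c₂) - a₂ * (b₁ * c₃ - b₃ * c₁)
          + a₃ * (b₁ * c₂ - b₂ * c₁)) * ((c₁ * p.1 + c₂ * p.2 + c₃)⁻¹) ^ 3 ∧
      Jac w₁ w₂ p ≠ 0 ∧
      brX w₁ w₂ p = 0 ∧
      brY w₁ w₂ p = 0 ∧
      sqX w₁ w₂ p = 0 ∧
      sqY w₁ w₂ p = 0 := by
  subst hw₁ hw₂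
  intro p hp
  have h10a := pdx_lin a₁ a₂ a₃ c₁ c₂ c₃ p hp
  have h01a := pdy_lin a₁ a₂ a₃ c₁ c₂ c₃ p hp
  have h20a := pdxx_lin a₁ a₂ a₃ c₁ c₂ c₃ p hp
  have h02a := pdyy_lin a₁ a₂ a₃ c₁ c₂ c₃ p hp
  have h11a := pdxy_lin a₁ a₂ a₃ c₁ c₂ c₃ p hp
  have h10b := pdx_lin b₁ b₂ b₃ c₁ c₂ c₃ p hp
  have h01b := pdy_lin b₁ b₂ b₃ c₁ c₂ c₃ p hp
  have h20b := pdxx_lin b₁ b₂ b₃ c₁ c₂ c₃ p hp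
  have h02b := pdyy_lin b₁ b₂ b₃ c₁ c₂ c₃ p hp
  have h11b := pdxy_lin b₁ b₂ b₃ c₁ c₂ c₃ p hp
  have hJ : Jac (fun p => (a₁ * p.1 + a₂ * p.2 + a₃) / (c₁ * p.1 + c₂ * p.2 + c₃))
      (fun p => (b₁ * p.1 + b₂ * p.2 + b₃) / (c₁ * p.1 + c₂ * p.2 + c₃)) p =
      (a₁ * (b₂ * c₃ - b₃ * c₂) - a₂ * (b₁ * c₃ - b₃ * c₁)
        + a₃ * (b₁ * c₂ - b₂ * c₁)) * ((c₁ * p.1 + c₂ * p.2 + c₃)⁻¹) ^ 3 := by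
    simp only [Jac]
    rw [h10a, h01a, h10b, h01b]
    field_simp
    ring
  have hJne : Jac (fun p => (a₁ * p.1 + a₂ * p.2 + a₃) / (c₁ * p.1 + c₂ * p.2 + c₃))
      (fun p => (b₁ * p.1 + b₂ * p.2 + b₃) / (c₁ * p.1 + c₂ * p.2 + c₃)) p ≠ 0 := by
    rw [hJ]
    exact mul_ne_zero hdet (pow_ne_zero _ (inv_ne_zero hp))
  refine ⟨hJ, hJne, ?_, ?_, ?_, ?_⟩
  · simp only [brX]
    rw [h10a, h10b, h20a, h20b]
    rw [div_eq_zero_iff]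
    left
    field_simp
    ring
  · simp only [brY]
    rw [h01a, h01b, h02a, h02b]
    rw [neg_div, neg_eq_zero, div_eq_zero_iff]
    left
    field_simp
    ring
  · simp only [sqX]
    rw [h01a, h01b, h20a, h20b, h10a, h10b, h11a, h11b]
    rw [div_eq_zero_iff]
    left
    field_simp
    ring
  · simp only [sqY]
    rw [h10a, h10b, h02a, h02b, h01a, h01b, h11a, h11b]
    rw [neg_div, neg_eq_zero, div_eq_zero_iff]
    left
    field_simp
    ring
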